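/- For nonzero vectors x, y, z in ℂⁿ, defining ψ_{u,v} = arccos(|⟨u,v⟩|/(‖u‖‖v‖)) ∈ [0, π/2], one has cos(ψ_{x,z} + ψ_{z,y}) ≤ cos ψ_{x,y} + |cos ψ_{x,y} − cos ψ_{x,z}·cos ψ_{z,y}| − sin ψ_{x,z}·sin ψ_{z,y} ≤ cos ψ_{x,y}, and hence ψ_{x,y} ≤ ψ_{x,z} + ψ_{z,y}. -/

import Mathlib

open scoped InnerProductSpace

lemma innerProjSub {n : ℕ} (x y z : EuclideanSpace ℂ (Fin n)) (hz : z ≠ 0) :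
    ⟪x - ((⟪z,x⟫_ℂ)/((‖z‖:ℂ)^2)) • z, y - ((⟪z,y⟫_ℂ)/((‖z‖:ℂ)^2)) • z⟫_ℂ
      = ⟪x,y⟫_ℂ - ⟪x,z⟫_ℂ * ⟪z,y⟫_ℂ / ((‖z‖:ℂ)^2) := by
  have hz' : (‖z‖:ℂ) ≠ 0 := by simpa using norm_ne_zero_iff.mpr hz
  simp only [inner_sub_left, inner_sub_right, inner_smul_left, inner_smul_right,
    inner_self_eq_norm_sq_to_K, map_div₀, map_pow, Complex.conj_ofReal, inner_conj_symm]
  field_simp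
  simp only [RCLike.ofReal_eq_complex_ofReal]
  ring

lemma normProjSub {n : ℕ} (x z : EuclideanSpace ℂ (Fin n)) (hz : z ≠ 0) :
    ‖x - ((⟪z,x⟫_ℂ)/((‖z‖:ℂ)^2)) • z‖^2 = ‖x‖^2 - ‖⟪x,z⟫_ℂ‖^2 / ‖z‖^2 := by
  have h := innerProjSub x x z hz
  have h2 : ⟪x,z⟫_ℂ * ⟪z,x⟫_ℂ = ((‖⟪x,z⟫_ℂ‖^2:ℝ):ℂ) := by
    rw [← inner_conj_symm x z]
    rw [Complex.conj_mul']
    push_cast [Complex.normSq_eq_norm_sq]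
    rw [Complex.norm_conj]
  rw [inner_self_eq_norm_sq_to_K, inner_self_eq_norm_sq_to_K, h2] at h
  have h3 : ((‖x - ((⟪z,x⟫_ℂ)/((‖z‖:ℂ)^2)) • z‖^2 : ℝ) : ℂ)
      = (((‖x‖^2 - ‖⟪x,z⟫_ℂ‖^2 / ‖z‖^2 : ℝ)) : ℂ) := by
    push_cast
    convert h using 2 <;> simp
  exact_mod_cast h3

lemma projNormEq {n : ℕ} (x z : EuclideanSpace ℂ (Fin n)) (hx : x ≠ 0) (hz : z ≠ 0) :
    ‖x - ((⟪z,x⟫_ℂ)/((‖z‖:ℂ)^2)) • z‖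
      = ‖x‖ * Real.sqrt (1 - (‖⟪x,z⟫_ℂ‖/(‖x‖*‖z‖))^2) := by
  have hnx : (0:ℝ) < ‖x‖ := norm_pos_iff.mpr hx
  have hnz : (0:ℝ) < ‖z‖ := norm_pos_iff.mpr hz
  have h1 : ‖x - ((⟪z,x⟫_ℂ)/((‖z‖:ℂ)^2)) • z‖
      = Real.sqrt (‖x‖^2 - ‖⟪x,z⟫_ℂ‖^2 / ‖z‖^2) := by
    rw [← normProjSub x z hz, Real.sqrt_sq (norm_nonneg _)]
  rw [h1, ← Real.sqrt_sq hnx.le, ← Real.sqrt_mul (sq_nonneg ‖x‖)]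
  congr 1
  field_simp
  simp only [Real.sqrt_sq hnx.le]

lemma keyIneq {n : ℕ} (x y z : EuclideanSpace ℂ (Fin n)) (hx : x ≠ 0) (hy : y ≠ 0)
    (hz : z ≠ 0) :
    |‖⟪x,y⟫_ℂ‖/(‖x‖*‖y‖) - ‖⟪x,z⟫_ℂ‖/(‖x‖*‖z‖) * (‖⟪z,y⟫_ℂ‖/(‖z‖*‖y‖))|
      ≤ Real.sqrt (1 - (‖⟪x,z⟫_ℂ‖/(‖x‖*‖z‖))^2)
        * Real.sqrt (1 - (‖⟪z,y⟫_ℂ‖/(‖z‖*‖y‖))^2) := by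
  have hnx : (0:ℝ) < ‖x‖ := norm_pos_iff.mpr hx
  have hny : (0:ℝ) < ‖y‖ := norm_pos_iff.mpr hy
  have hnz : (0:ℝ) < ‖z‖ := norm_pos_iff.mpr hz
  set a := x - ((⟪z,x⟫_ℂ)/((‖z‖:ℂ)^2)) • z with hadef
  set b := y - ((⟪z,y⟫_ℂ)/((‖z‖:ℂ)^2)) • z with hbdef
  have h1 : |‖⟪x,y⟫_ℂ‖ - ‖⟪x,z⟫_ℂ‖*‖⟪z,y⟫_ℂ‖/‖z‖^2| ≤ ‖a‖ * ‖b‖ := by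
    have e1 : ‖⟪x,z⟫_ℂ * ⟪z,y⟫_ℂ / ((‖z‖:ℂ)^2)‖ = ‖⟪x,z⟫_ℂ‖*‖⟪z,y⟫_ℂ‖/‖z‖^2 := by
      simp [norm_div, norm_mul]
    calc |‖⟪x,y⟫_ℂ‖ - ‖⟪x,z⟫_ℂ‖*‖⟪z,y⟫_ℂ‖/‖z‖^2|
        = |‖⟪x,y⟫_ℂ‖ - ‖⟪x,z⟫_ℂ * ⟪z,y⟫_ℂ / ((‖z‖:ℂ)^2)‖| := by rw [e1]
      _ ≤ ‖⟪x,y⟫_ℂ - ⟪x,z⟫_ℂ * ⟪z,y⟫_ℂ / ((‖z‖:ℂ)^2)‖ := abs_norm_sub_norm_le _ _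
      _ = ‖⟪a,b⟫_ℂ‖ := by rw [innerProjSub x y z hz]
      _ ≤ ‖a‖ * ‖b‖ := norm_inner_le_norm a b
  have ha := projNormEq x z hx hz
  have hb' := projNormEq y z hy hz
  have hb : ‖b‖ = ‖y‖ * Real.sqrt (1 - (‖⟪z,y⟫_ℂ‖/(‖z‖*‖y‖))^2) := by
    rw [hbdef, hb']
    rw [← norm_inner_symm y z]
    ring_nf
  have e2 : |‖⟪x,y⟫_ℂ‖/(‖x‖*‖y‖) - ‖⟪x,z⟫_ℂ‖/(‖x‖*‖z‖) * (‖⟪z,y⟫_ℂ‖/(‖z‖*‖y‖))|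
      = |‖⟪x,y⟫_ℂ‖ - ‖⟪x,z⟫_ℂ‖*‖⟪z,y⟫_ℂ‖/‖z‖^2| / (‖x‖*‖y‖) := by
    have e3 : ‖⟪x,y⟫_ℂ‖/(‖x‖*‖y‖) - ‖⟪x,z⟫_ℂ‖/(‖x‖*‖z‖) * (‖⟪z,y⟫_ℂ‖/(‖z‖*‖y‖))
        = (‖⟪x,y⟫_ℂ‖ - ‖⟪x,z⟫_ℂ‖*‖⟪z,y⟫_ℂ‖/‖z‖^2) / (‖x‖*‖y‖) := by
      field_simp
    rw [e3, abs_div, abs_of_pos (mul_pos hnx hny)]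
  rw [e2]
  rw [div_le_iff₀ (mul_pos hnx hny)]
  calc |‖⟪x,y⟫_ℂ‖ - ‖⟪x,z⟫_ℂ‖*‖⟪z,y⟫_ℂ‖/‖z‖^2| ≤ ‖a‖ * ‖b‖ := h1
    _ = Real.sqrt (1 - (‖⟪x,z⟫_ℂ‖/(‖x‖*‖z‖))^2)
        * Real.sqrt (1 - (‖⟪z,y⟫_ℂ‖/(‖z‖*‖y‖))^2) * (‖x‖*‖y‖) := by
      rw [ha, hb]; ring

noncomputable def angleCS {n : ℕ} (u v : EuclideanSpace ℂ (Fin n)) : ℝ :=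
  Real.arccos (‖⟪u, v⟫_ℂ‖ / (‖u‖ * ‖v‖))

lemma ratio_nonneg {n : ℕ} (u v : EuclideanSpace ℂ (Fin n)) :
    0 ≤ ‖⟪u,v⟫_ℂ‖/(‖u‖*‖v‖) :=
  div_nonneg (norm_nonneg _) (mul_nonneg (norm_nonneg _) (norm_nonneg _))

lemma ratio_le_one {n : ℕ} (u v : EuclideanSpace ℂ (Fin n)) :
    ‖⟪u,v⟫_ℂ‖/(‖u‖*‖v‖) ≤ 1 := by
  rcases eq_or_ne u 0 with rfl | hu
  · simp
  rcases eq_or_ne v 0 with rfl | hv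
  · simp
  exact div_le_one_of_le₀ (norm_inner_le_norm u v)
    (mul_nonneg (norm_nonneg _) (norm_nonneg _))

lemma cos_angleCS {n : ℕ} (u v : EuclideanSpace ℂ (Fin n)) :
    Real.cos (angleCS u v) = ‖⟪u,v⟫_ℂ‖/(‖u‖*‖v‖) :=
  Real.cos_arccos (by linarith [ratio_nonneg u v]) (ratio_le_one u v)

lemma sin_angleCS {n : ℕ} (u v : EuclideanSpace ℂ (Fin n)) :
    Real.sin (angleCS u v) = Real.sqrt (1 - (‖⟪u,v⟫_ℂ‖/(‖u‖*‖v‖))^2) :=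
  Real.sin_arccos _

theorem krein_lin_triangle {n : ℕ} (x y z : EuclideanSpace ℂ (Fin n))
    (hx : x ≠ 0) (hy : y ≠ 0) (hz : z ≠ 0) :
    (Real.cos (angleCS x z + angleCS z y) ≤
      Real.cos (angleCS x y) +
        |Real.cos (angleCS x y) - Real.cos (angleCS x z) * Real.cos (angleCS z y)| -
        Real.sin (angleCS x z) * Real.sin (angleCS z y)) ∧
    (Real.cos (angleCS x y) +
        |Real.cos (angleCS x y) - Real.cos (angleCS x z) * Real.cos (angleCS z y)| -
        Real.sin (angleCS x z) * Real.sin (angleCS z y) ≤ Real.cos (angleCS x y)) ∧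
    angleCS x y ≤ angleCS x z + angleCS z y := by
  have h1 : Real.cos (angleCS x z + angleCS z y) ≤
      Real.cos (angleCS x y) +
        |Real.cos (angleCS x y) - Real.cos (angleCS x z) * Real.cos (angleCS z y)| -
        Real.sin (angleCS x z) * Real.sin (angleCS z y) := by
    rw [Real.cos_add]
    have := le_abs_self (Real.cos (angleCS x z) * Real.cos (angleCS z y) -
      Real.cos (angleCS x y))
    rw [abs_sub_comm] at this
    linarith
  have h2 : Real.cos (angleCS x y) +
        |Real.cos (angleCS x y) - Real.cos (angleCS x z) * Real.cos (angleCS z y)| -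
        Real.sin (angleCS x z) * Real.sin (angleCS z y) ≤ Real.cos (angleCS x y) := by
    have key := keyIneq x y z hx hy hz
    rw [cos_angleCS, cos_angleCS, cos_angleCS, sin_angleCS, sin_angleCS]
    linarith
  refine ⟨h1, h2, ?_⟩
  have hcos : Real.cos (angleCS x z + angleCS z y) ≤ Real.cos (angleCS x y) :=
    le_trans h1 h2
  set s := angleCS x z + angleCS z y with hs
  rcases le_or_gt s Real.pi with hsle | hsgt
  · by_contra hlt
    push_neg at hlt
    have h0s : 0 ≤ s := add_nonneg (Real.arccos_nonneg _) (Real.arccos_nonneg _)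
    have h0a : 0 ≤ angleCS x y := Real.arccos_nonneg _
    have hapi : angleCS x y ≤ Real.pi := Real.arccos_le_pi _
    have := Real.strictAntiOn_cos (Set.mem_Icc.mpr ⟨h0s, hsle⟩)
      (Set.mem_Icc.mpr ⟨h0a, hapi⟩) hlt
    linarith
  · exact le_trans (Real.arccos_le_pi _) hsgt.le
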